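/- Let (P_s)_{s∈𝒰} and (K_s)_{s∈𝒰} satisfy the recursions K_r = −(R_{rr} + B_{sr}ᵀ P_s B_{sr})^{-1} B_{sr}ᵀ P_s A_{sr} and P_r = Q_{rr} + K_rᵀ R_{rr} K_r + (A_{sr} + B_{sr}K_r)ᵀ P_s (A_{sr} + B_{sr}K_r), where for each r, s is its unique successor. Suppose internal states evolve as ζ_{t+1,s} = Σ_{r→s}(A_{sr} + B_{sr}K_r)ζ_{t,r} + Σ_{w_i→s} I_{s,{i}} w_{t,i} with ζ_{0,s} = 0, the ζ_{t,s} for distinct s are independent with mean zero, and w_{t,i} ~ N(0, σ_w² I). Then for each t, E[Σ_s ζ_{t,s}ᵀ P_s ζ_{t,s}] − E[Σ_s ζ_{t+1,s}ᵀ P_s ζ_{t+1,s}] = E[Σ_s ζ_{t,s}ᵀ(Q_{ss} + K_sᵀ R_{ss} K_s)ζ_{t,s}] − J⋆, where J⋆ = σ_w² Σ_{i: w_i→s} Tr(I_{{i},s} P_s I_{s,{i}}). -/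

import Mathlib

open MeasureTheory ProbabilityTheory
open scoped RealInnerProductSpace

section helpers
variable {Ω : Type*} [MeasurableSpace Ω] {μ : Measure Ω}

lemma quad_integrable {N M : ℕ}
    (X : Ω → EuclideanSpace ℝ (Fin N)) (Y : Ω → EuclideanSpace ℝ (Fin M))
    (hXm : Measurable X) (hYm : Measurable Y)
    (hX : Integrable (fun ω => ‖X ω‖ ^ 2) μ) (hY : Integrable (fun ω => ‖Y ω‖ ^ 2) μ)
    (T : EuclideanSpace ℝ (Fin M) →L[ℝ] EuclideanSpace ℝ (Fin N)) :
    Integrable (fun ω => ⟪X ω, T (Y ω)⟫) μ := by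
  refine Integrable.mono' ((hX.add hY).const_mul ‖T‖) ?_ (Filter.Eventually.of_forall fun ω => ?_)
  · exact (hXm.inner (T.continuous.measurable.comp hYm)).aestronglyMeasurable
  · have h1 : |⟪X ω, T (Y ω)⟫| ≤ ‖X ω‖ * ‖T (Y ω)‖ := abs_real_inner_le_norm _ _
    have h2 : ‖T (Y ω)‖ ≤ ‖T‖ * ‖Y ω‖ := T.le_opNorm _
    have h3 : ‖X ω‖ * (‖T‖ * ‖Y ω‖) ≤ ‖T‖ * (‖X ω‖ ^ 2 + ‖Y ω‖ ^ 2) := by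
      nlinarith [norm_nonneg (X ω), norm_nonneg (Y ω), norm_nonneg T, sq_nonneg (‖X ω‖ - ‖Y ω‖)]
    calc ‖⟪X ω, T (Y ω)⟫‖ = |⟪X ω, T (Y ω)⟫| := Real.norm_eq_abs _
      _ ≤ ‖X ω‖ * ‖T (Y ω)‖ := h1
      _ ≤ ‖X ω‖ * (‖T‖ * ‖Y ω‖) := by
          exact mul_le_mul_of_nonneg_left h2 (norm_nonneg _)
      _ ≤ ‖T‖ * (‖X ω‖ ^ 2 + ‖Y ω‖ ^ 2) := h3

end helpers

section helpers2
variable {Ω : Type*} [MeasurableSpace Ω] {μ : Measure Ω}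

lemma inner_map_expand {N M : ℕ} (T : EuclideanSpace ℝ (Fin M) →L[ℝ] EuclideanSpace ℝ (Fin N))
    (x : EuclideanSpace ℝ (Fin N)) (y : EuclideanSpace ℝ (Fin M)) :
    ⟪x, T y⟫ = ∑ j : Fin N, ∑ k : Fin M,
      (ContinuousLinearMap.adjoint T (EuclideanSpace.single j (1:ℝ))) k * (x j * y k) := by
  have hTy : ∀ j, (T y) j = ∑ k : Fin M,
      (ContinuousLinearMap.adjoint T (EuclideanSpace.single j (1:ℝ))) k * y k := by
    intro j
    have h1 : (T y) j = ⟪EuclideanSpace.single j (1:ℝ), T y⟫ := by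
      rw [EuclideanSpace.inner_single_left]; simp
    rw [h1, ← ContinuousLinearMap.adjoint_inner_left]
    rw [PiLp.inner_apply]; simp [RCLike.inner_apply]
    exact Finset.sum_congr rfl fun k _ => mul_comm _ _
  rw [PiLp.inner_apply]
  simp only [RCLike.inner_apply, conj_trivial]
  refine Finset.sum_congr rfl fun j _ => ?_
  rw [hTy j, Finset.sum_mul]
  refine Finset.sum_congr rfl fun k _ => ?_
  ring

end helpers2

section helpers3
variable {Ω : Type*} [MeasurableSpace Ω] {μ : Measure Ω} [IsProbabilityMeasure μ]

lemma vec_integrable {N : ℕ} (X : Ω → EuclideanSpace ℝ (Fin N))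
    (hXm : Measurable X) (hX : Integrable (fun ω => ‖X ω‖ ^ 2) μ) :
    Integrable X μ := by
  refine Integrable.mono' ((integrable_const (1:ℝ)).add hX)
    hXm.aestronglyMeasurable (Filter.Eventually.of_forall fun ω => ?_)
  simp only [Pi.add_apply]
  have := norm_nonneg (X ω)
  nlinarith [sq_nonneg (‖X ω‖ - 1)]

lemma comp_integrable {N : ℕ} (X : Ω → EuclideanSpace ℝ (Fin N))
    (hXm : Measurable X) (hX : Integrable (fun ω => ‖X ω‖ ^ 2) μ) (j : Fin N) :
    Integrable (fun ω => X ω j) μ :=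
  (EuclideanSpace.proj j : EuclideanSpace ℝ (Fin N) →L[ℝ] ℝ).integrable_comp
    (vec_integrable X hXm hX)

lemma comp_mean_zero {N : ℕ} (X : Ω → EuclideanSpace ℝ (Fin N))
    (hXm : Measurable X) (hX : Integrable (fun ω => ‖X ω‖ ^ 2) μ)
    (hX0 : ∫ ω, X ω ∂μ = 0) (j : Fin N) :
    ∫ ω, X ω j ∂μ = 0 := by
  have := ((EuclideanSpace.proj j : EuclideanSpace ℝ (Fin N) →L[ℝ] ℝ)).integral_comp_comm
    (vec_integrable X hXm hX)
  simpa [hX0] using this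

lemma cross_zero {N M : ℕ} (X : Ω → EuclideanSpace ℝ (Fin N)) (Y : Ω → EuclideanSpace ℝ (Fin M))
    (hXm : Measurable X) (hYm : Measurable Y)
    (hX : Integrable (fun ω => ‖X ω‖ ^ 2) μ) (hY : Integrable (fun ω => ‖Y ω‖ ^ 2) μ)
    (hX0 : ∫ ω, X ω ∂μ = 0)
    (hInd : IndepFun X Y μ)
    (T : EuclideanSpace ℝ (Fin M) →L[ℝ] EuclideanSpace ℝ (Fin N)) :
    ∫ ω, ⟪X ω, T (Y ω)⟫ ∂μ = 0 := by
  have hXj := fun j => comp_integrable X hXm hX j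
  have hYk := fun k => comp_integrable Y hYm hY k
  have hindjk : ∀ (j : Fin N) (k : Fin M),
      IndepFun (fun ω => X ω j) (fun ω => Y ω k) μ := fun j k => by
    have hj : Measurable (fun x : EuclideanSpace ℝ (Fin N) => x j) :=
      (EuclideanSpace.proj j : EuclideanSpace ℝ (Fin N) →L[ℝ] ℝ).continuous.measurable
    have hk : Measurable (fun y : EuclideanSpace ℝ (Fin M) => y k) :=
      (EuclideanSpace.proj k : EuclideanSpace ℝ (Fin M) →L[ℝ] ℝ).continuous.measurable
    exact hInd.comp hj hk
  calc ∫ ω, ⟪X ω, T (Y ω)⟫ ∂μ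
      = ∫ ω, ∑ j : Fin N, ∑ k : Fin M,
          (ContinuousLinearMap.adjoint T (EuclideanSpace.single j (1:ℝ))) k
            * (X ω j * Y ω k) ∂μ := by
        congr 1; funext ω; exact inner_map_expand T (X ω) (Y ω)
    _ = ∑ j : Fin N, ∑ k : Fin M,
          (ContinuousLinearMap.adjoint T (EuclideanSpace.single j (1:ℝ))) k
            * ∫ ω, X ω j * Y ω k ∂μ := by
        rw [integral_finset_sum]
        · refine Finset.sum_congr rfl fun j _ => ?_
          rw [integral_finset_sum]
          · exact Finset.sum_congr rfl fun k _ => MeasureTheory.integral_const_mul _ _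
          · intro k _
            exact ((hindjk j k).integrable_mul (hXj j) (hYk k)).const_mul _
        · intro j _
          exact integrable_finset_sum _ fun k _ =>
            ((hindjk j k).integrable_mul (hXj j) (hYk k)).const_mul _
    _ = 0 := by
        refine Finset.sum_eq_zero fun j _ => Finset.sum_eq_zero fun k _ => ?_
        have hm := (hindjk j k).integral_mul_eq_mul_integral (hXj j).aestronglyMeasurable (hYk k).aestronglyMeasurable
        have hm2 : ∫ ω, X ω j * Y ω k ∂μ = (∫ ω, X ω j ∂μ) * ∫ ω, Y ω k ∂μ := by
          rw [← hm]; rfl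
        rw [hm2, comp_mean_zero X hXm hX hX0 j]
        ring

end helpers3

section helpers4
variable {Ω : Type*} [MeasurableSpace Ω] {μ : Measure Ω} [IsProbabilityMeasure μ]

lemma trace_expand {M : ℕ} (T : EuclideanSpace ℝ (Fin M) →L[ℝ] EuclideanSpace ℝ (Fin M)) :
    LinearMap.trace ℝ (EuclideanSpace ℝ (Fin M)) T.toLinearMap
      = ∑ j : Fin M, (ContinuousLinearMap.adjoint T (EuclideanSpace.single j (1:ℝ))) j := by
  rw [LinearMap.trace_eq_matrix_trace ℝ
    (EuclideanSpace.basisFun (Fin M) ℝ).toBasis T.toLinearMap, Matrix.trace]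
  refine Finset.sum_congr rfl fun j _ => ?_
  have h1 : (ContinuousLinearMap.adjoint T (EuclideanSpace.single j (1:ℝ))) j
      = ⟪EuclideanSpace.single j (1:ℝ), ContinuousLinearMap.adjoint T
          (EuclideanSpace.single j (1:ℝ))⟫ := by
    rw [EuclideanSpace.inner_single_left]; simp
  rw [h1, ContinuousLinearMap.adjoint_inner_right]
  simp [Matrix.diag, LinearMap.toMatrix_apply, EuclideanSpace.inner_single_left,
    OrthonormalBasis.coe_toBasis_repr_apply, EuclideanSpace.basisFun_repr,
    EuclideanSpace.basisFun_apply]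
  rw [real_inner_comm, EuclideanSpace.inner_single_left]; simp

lemma noise_quad {M : ℕ} (W : Ω → EuclideanSpace ℝ (Fin M))
    (hWm : Measurable W) (hW : Integrable (fun ω => ‖W ω‖ ^ 2) μ) (σ2 : ℝ)
    (hcov : ∀ x y : EuclideanSpace ℝ (Fin M),
      ∫ ω, ⟪x, W ω⟫ * ⟪y, W ω⟫ ∂μ = σ2 * ⟪x, y⟫)
    (T : EuclideanSpace ℝ (Fin M) →L[ℝ] EuclideanSpace ℝ (Fin M)) :
    ∫ ω, ⟪W ω, T (W ω)⟫ ∂μ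
      = σ2 * LinearMap.trace ℝ (EuclideanSpace ℝ (Fin M)) T.toLinearMap := by
  have hjk : ∀ j k : Fin M, Integrable (fun ω => W ω j * W ω k) μ := by
    intro j k
    refine Integrable.mono' hW
      (((EuclideanSpace.proj j : EuclideanSpace ℝ (Fin M) →L[ℝ] ℝ).continuous.measurable.comp hWm).mul
        ((EuclideanSpace.proj k : EuclideanSpace ℝ (Fin M) →L[ℝ] ℝ).continuous.measurable.comp hWm)).aestronglyMeasurable
      (Filter.Eventually.of_forall fun ω => ?_)
    have hb : ∀ l : Fin M, |W ω l| ≤ ‖W ω‖ := by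
      intro l
      have h1 : |⟪(EuclideanSpace.single l (1:ℝ) : EuclideanSpace ℝ (Fin M)), W ω⟫|
          ≤ ‖(EuclideanSpace.single l (1:ℝ) : EuclideanSpace ℝ (Fin M))‖ * ‖W ω‖ :=
        abs_real_inner_le_norm _ _
      simpa [EuclideanSpace.inner_single_left, EuclideanSpace.norm_single] using h1
    have := mul_le_mul (hb j) (hb k) (abs_nonneg _) (norm_nonneg _)
    calc ‖W ω j * W ω k‖ = |W ω j| * |W ω k| := by rw [Real.norm_eq_abs, abs_mul]
      _ ≤ ‖W ω‖ * ‖W ω‖ := this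
      _ = ‖W ω‖ ^ 2 := (sq ‖W ω‖).symm
  have hcov' : ∀ j k : Fin M, ∫ ω, W ω j * W ω k ∂μ
      = if k = j then σ2 else 0 := by
    intro j k
    have := hcov (EuclideanSpace.single j (1:ℝ)) (EuclideanSpace.single k (1:ℝ))
    simp [EuclideanSpace.inner_single_left] at this
    rw [this]; exact if_congr eq_comm rfl rfl
  calc ∫ ω, ⟪W ω, T (W ω)⟫ ∂μ
      = ∫ ω, ∑ j : Fin M, ∑ k : Fin M,
          (ContinuousLinearMap.adjoint T (EuclideanSpace.single j (1:ℝ))) k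
            * (W ω j * W ω k) ∂μ := by
        congr 1; funext ω; exact inner_map_expand T (W ω) (W ω)
    _ = ∑ j : Fin M, ∑ k : Fin M,
          (ContinuousLinearMap.adjoint T (EuclideanSpace.single j (1:ℝ))) k
            * ∫ ω, W ω j * W ω k ∂μ := by
        rw [integral_finset_sum]
        · refine Finset.sum_congr rfl fun j _ => ?_
          rw [integral_finset_sum]
          · exact Finset.sum_congr rfl fun k _ => MeasureTheory.integral_const_mul _ _
          · exact fun k _ => (hjk j k).const_mul _
        · exact fun j _ => integrable_finset_sum _ fun k _ => (hjk j k).const_mul _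
    _ = σ2 * LinearMap.trace ℝ (EuclideanSpace ℝ (Fin M)) T.toLinearMap := by
        rw [trace_expand, Finset.mul_sum]
        refine Finset.sum_congr rfl fun j _ => ?_
        rw [Finset.sum_eq_single j]
        · rw [hcov' j j]; simp; ring
        · intro k _ hkj
          rw [hcov' j k]
          simp [hkj]
        · simp

end helpers4

set_option maxHeartbeats 2000000 in
theorem stmt19
    {U V : Type*} [Fintype U] [DecidableEq U] [Fintype V] [DecidableEq V]
    (n mdim : U → ℕ) (ddim : V → ℕ) (succ : U → U) (leaf : V → U)
    (A : ∀ s r : U, EuclideanSpace ℝ (Fin (n r)) →L[ℝ] EuclideanSpace ℝ (Fin (n s)))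
    (B : ∀ s r : U, EuclideanSpace ℝ (Fin (mdim r)) →L[ℝ] EuclideanSpace ℝ (Fin (n s)))
    (Q P : ∀ r : U, EuclideanSpace ℝ (Fin (n r)) →L[ℝ] EuclideanSpace ℝ (Fin (n r)))
    (Rm : ∀ r : U, EuclideanSpace ℝ (Fin (mdim r)) →L[ℝ] EuclideanSpace ℝ (Fin (mdim r)))
    (K : ∀ r : U, EuclideanSpace ℝ (Fin (n r)) →L[ℝ] EuclideanSpace ℝ (Fin (mdim r)))
    (ι : ∀ (s : U) (i : V), EuclideanSpace ℝ (Fin (ddim i)) →L[ℝ] EuclideanSpace ℝ (Fin (n s)))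
    (hK : ∀ r, K r =
      -((Ring.inverse (Rm r +
          (ContinuousLinearMap.adjoint (B (succ r) r)).comp
            ((P (succ r)).comp (B (succ r) r)))).comp
        ((ContinuousLinearMap.adjoint (B (succ r) r)).comp ((P (succ r)).comp (A (succ r) r)))))
    (hP : ∀ r, P r = Q r + (ContinuousLinearMap.adjoint (K r)).comp ((Rm r).comp (K r)) +
      (ContinuousLinearMap.adjoint (A (succ r) r + (B (succ r) r).comp (K r))).comp
        ((P (succ r)).comp (A (succ r) r + (B (succ r) r).comp (K r))))
    {Ω : Type*} [MeasurableSpace Ω] (μ : Measure Ω) [IsProbabilityMeasure μ]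
    (σw : ℝ) (hσw : 0 < σw)
    (ζ : ℕ → ∀ s : U, Ω → EuclideanSpace ℝ (Fin (n s)))
    (w : ℕ → ∀ i : V, Ω → EuclideanSpace ℝ (Fin (ddim i)))
    (hζ0 : ∀ s ω, ζ 0 s ω = 0)
    (hrec : ∀ t s ω, ζ (t + 1) s ω =
      (∑ r ∈ Finset.univ.filter (fun r => succ r = s),
        (A s r (ζ t r ω) + B s r (K r (ζ t r ω)))) +
      ∑ i ∈ Finset.univ.filter (fun i => leaf i = s), ι s i (w t i ω))
    (hζmeas : ∀ t s, Measurable (ζ t s)) (hwmeas : ∀ t i, Measurable (w t i))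
    (hζint : ∀ t s, Integrable (fun ω => ‖ζ t s ω‖ ^ 2) μ)
    (hwint : ∀ t i, Integrable (fun ω => ‖w t i ω‖ ^ 2) μ)
    (hζmean : ∀ t s, ∫ ω, ζ t s ω ∂μ = 0)
    (hwmean : ∀ t i, ∫ ω, w t i ω ∂μ = 0)
    (hwcov : ∀ t i (x y : EuclideanSpace ℝ (Fin (ddim i))),
      ∫ ω, ⟪x, w t i ω⟫ * ⟪y, w t i ω⟫ ∂μ = σw ^ 2 * ⟪x, y⟫)
    (hindζζ : ∀ t, ∀ r r' : U, r ≠ r' → IndepFun (ζ t r) (ζ t r') μ)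
    (hindζw : ∀ t (r : U) (i : V), IndepFun (ζ t r) (w t i) μ)
    (hindww : ∀ t, ∀ i i' : V, i ≠ i' → IndepFun (w t i) (w t i') μ) :
    ∀ t : ℕ,
      (∫ ω, ∑ s : U, ⟪ζ t s ω, P s (ζ t s ω)⟫ ∂μ) -
        (∫ ω, ∑ s : U, ⟪ζ (t + 1) s ω, P s (ζ (t + 1) s ω)⟫ ∂μ) =
      (∫ ω, ∑ s : U,
          ⟪ζ t s ω,
            (Q s + (ContinuousLinearMap.adjoint (K s)).comp ((Rm s).comp (K s))) (ζ t s ω)⟫ ∂μ) -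
        σw ^ 2 * ∑ i : V,
          LinearMap.trace ℝ (EuclideanSpace ℝ (Fin (ddim i)))
            (((ContinuousLinearMap.adjoint (ι (leaf i) i)).comp
              ((P (leaf i)).comp (ι (leaf i) i))).toLinearMap) := by
  intro t
  classical
  set L : ∀ s r : U, EuclideanSpace ℝ (Fin (n r)) →L[ℝ] EuclideanSpace ℝ (Fin (n s)) :=
    fun s r => A s r + (B s r).comp (K r) with hLdef
  -- pointwise rewrite of the recursion
  have hz : ∀ s ω, ζ (t+1) s ω =
      (∑ r ∈ Finset.univ.filter (fun r => succ r = s), L s r (ζ t r ω)) +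
      ∑ i ∈ Finset.univ.filter (fun i => leaf i = s), ι s i (w t i ω) := by
    intro s ω
    rw [hrec t s ω]
    simp [hLdef]
  -- pointwise quadratic expansion
  have hquad : ∀ s ω, ⟪ζ (t+1) s ω, P s (ζ (t+1) s ω)⟫ =
      ((∑ r ∈ Finset.univ.filter (fun r => succ r = s),
          ∑ r' ∈ Finset.univ.filter (fun r => succ r = s),
            ⟪ζ t r ω, ((ContinuousLinearMap.adjoint (L s r)).comp
              ((P s).comp (L s r'))) (ζ t r' ω)⟫)
        + ∑ r ∈ Finset.univ.filter (fun r => succ r = s),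
            ∑ i ∈ Finset.univ.filter (fun i => leaf i = s),
              ⟪ζ t r ω, ((ContinuousLinearMap.adjoint (L s r)).comp
                ((P s).comp (ι s i))) (w t i ω)⟫)
      + ((∑ i ∈ Finset.univ.filter (fun i => leaf i = s),
            ∑ r ∈ Finset.univ.filter (fun r => succ r = s),
              ⟪w t i ω, ((ContinuousLinearMap.adjoint (ι s i)).comp
                ((P s).comp (L s r))) (ζ t r ω)⟫)
        + ∑ i ∈ Finset.univ.filter (fun i => leaf i = s),
            ∑ i' ∈ Finset.univ.filter (fun i => leaf i = s),
              ⟪w t i ω, ((ContinuousLinearMap.adjoint (ι s i)).comp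
                ((P s).comp (ι s i'))) (w t i' ω)⟫) := by
    intro s ω
    rw [hz s ω]
    simp only [inner_add_left, inner_add_right, map_add, sum_inner, inner_sum, map_sum,
      ContinuousLinearMap.comp_apply, ContinuousLinearMap.adjoint_inner_right]
    rw [Finset.sum_add_distrib, Finset.sum_add_distrib]
    have c1 : ∑ x ∈ Finset.univ.filter (fun r => succ r = s),
        ∑ i ∈ Finset.univ.filter (fun r => succ r = s),
          (inner ℝ (L s i (ζ t i ω)) (P s (L s x (ζ t x ω))) : ℝ)
        = ∑ i ∈ Finset.univ.filter (fun r => succ r = s),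
            ∑ x ∈ Finset.univ.filter (fun r => succ r = s),
              (inner ℝ (L s i (ζ t i ω)) (P s (L s x (ζ t x ω))) : ℝ) := Finset.sum_comm
    have c2 : ∑ x ∈ Finset.univ.filter (fun r => succ r = s),
        ∑ i ∈ Finset.univ.filter (fun i => leaf i = s),
          (inner ℝ (ι s i (w t i ω)) (P s (L s x (ζ t x ω))) : ℝ)
        = ∑ i ∈ Finset.univ.filter (fun i => leaf i = s),
            ∑ x ∈ Finset.univ.filter (fun r => succ r = s),
              (inner ℝ (ι s i (w t i ω)) (P s (L s x (ζ t x ω))) : ℝ) := Finset.sum_comm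
    have c3 : ∑ x ∈ Finset.univ.filter (fun i => leaf i = s),
        ∑ i ∈ Finset.univ.filter (fun r => succ r = s),
          (inner ℝ (L s i (ζ t i ω)) (P s (ι s x (w t x ω))) : ℝ)
        = ∑ i ∈ Finset.univ.filter (fun r => succ r = s),
            ∑ x ∈ Finset.univ.filter (fun i => leaf i = s),
              (inner ℝ (L s i (ζ t i ω)) (P s (ι s x (w t x ω))) : ℝ) := Finset.sum_comm
    have c4 : ∑ x ∈ Finset.univ.filter (fun i => leaf i = s),
        ∑ i ∈ Finset.univ.filter (fun i => leaf i = s),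
          (inner ℝ (ι s i (w t i ω)) (P s (ι s x (w t x ω))) : ℝ)
        = ∑ i ∈ Finset.univ.filter (fun i => leaf i = s),
            ∑ x ∈ Finset.univ.filter (fun i => leaf i = s),
              (inner ℝ (ι s i (w t i ω)) (P s (ι s x (w t x ω))) : ℝ) := Finset.sum_comm
    rw [c1, c2, c3, c4]
    ring
  -- integrability of all the pieces
  have hIζζ : ∀ (s r r' : U), Integrable (fun ω => ⟪ζ t r ω,
      ((ContinuousLinearMap.adjoint (L s r)).comp ((P s).comp (L s r'))) (ζ t r' ω)⟫) μ :=
    fun s r r' => quad_integrable _ _ (hζmeas t r) (hζmeas t r') (hζint t r) (hζint t r') _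
  have hIζw : ∀ (s r : U) (i : V), Integrable (fun ω => ⟪ζ t r ω,
      ((ContinuousLinearMap.adjoint (L s r)).comp ((P s).comp (ι s i))) (w t i ω)⟫) μ :=
    fun s r i => quad_integrable _ _ (hζmeas t r) (hwmeas t i) (hζint t r) (hwint t i) _
  have hIwζ : ∀ (s r : U) (i : V), Integrable (fun ω => ⟪w t i ω,
      ((ContinuousLinearMap.adjoint (ι s i)).comp ((P s).comp (L s r))) (ζ t r ω)⟫) μ :=
    fun s r i => quad_integrable _ _ (hwmeas t i) (hζmeas t r) (hwint t i) (hζint t r) _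
  have hIww : ∀ (s : U) (i i' : V), Integrable (fun ω => ⟪w t i ω,
      ((ContinuousLinearMap.adjoint (ι s i)).comp ((P s).comp (ι s i'))) (w t i' ω)⟫) μ :=
    fun s i i' => quad_integrable _ _ (hwmeas t i) (hwmeas t i') (hwint t i) (hwint t i') _
  -- one-step expansion of the expected cost
  have step : ∀ s : U, ∫ ω, ⟪ζ (t+1) s ω, P s (ζ (t+1) s ω)⟫ ∂μ
      = (∑ r ∈ Finset.univ.filter (fun r => succ r = s),
          ∫ ω, ⟪ζ t r ω, ((ContinuousLinearMap.adjoint (L s r)).comp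
            ((P s).comp (L s r))) (ζ t r ω)⟫ ∂μ)
        + σw ^ 2 * ∑ i ∈ Finset.univ.filter (fun i => leaf i = s),
            LinearMap.trace ℝ (EuclideanSpace ℝ (Fin (ddim i)))
              (((ContinuousLinearMap.adjoint (ι s i)).comp
                ((P s).comp (ι s i))).toLinearMap) := by
    intro s
    have I1 : Integrable (fun ω => ∑ r ∈ Finset.univ.filter (fun r => succ r = s),
        ∑ r' ∈ Finset.univ.filter (fun r => succ r = s),
          ⟪ζ t r ω, ((ContinuousLinearMap.adjoint (L s r)).comp
            ((P s).comp (L s r'))) (ζ t r' ω)⟫) μ :=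
      integrable_finset_sum _ fun r _ => integrable_finset_sum _ fun r' _ => hIζζ s r r'
    have I2 : Integrable (fun ω => ∑ r ∈ Finset.univ.filter (fun r => succ r = s),
        ∑ i ∈ Finset.univ.filter (fun i => leaf i = s),
          ⟪ζ t r ω, ((ContinuousLinearMap.adjoint (L s r)).comp
            ((P s).comp (ι s i))) (w t i ω)⟫) μ :=
      integrable_finset_sum _ fun r _ => integrable_finset_sum _ fun i _ => hIζw s r i
    have I3 : Integrable (fun ω => ∑ i ∈ Finset.univ.filter (fun i => leaf i = s),
        ∑ r ∈ Finset.univ.filter (fun r => succ r = s),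
          ⟪w t i ω, ((ContinuousLinearMap.adjoint (ι s i)).comp
            ((P s).comp (L s r))) (ζ t r ω)⟫) μ :=
      integrable_finset_sum _ fun i _ => integrable_finset_sum _ fun r _ => hIwζ s r i
    have I4 : Integrable (fun ω => ∑ i ∈ Finset.univ.filter (fun i => leaf i = s),
        ∑ i' ∈ Finset.univ.filter (fun i => leaf i = s),
          ⟪w t i ω, ((ContinuousLinearMap.adjoint (ι s i)).comp
            ((P s).comp (ι s i'))) (w t i' ω)⟫) μ :=
      integrable_finset_sum _ fun i _ => integrable_finset_sum _ fun i' _ => hIww s i i'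
    calc ∫ ω, ⟪ζ (t+1) s ω, P s (ζ (t+1) s ω)⟫ ∂μ
        = ∫ ω, ((∑ r ∈ Finset.univ.filter (fun r => succ r = s),
            ∑ r' ∈ Finset.univ.filter (fun r => succ r = s),
              ⟪ζ t r ω, ((ContinuousLinearMap.adjoint (L s r)).comp
                ((P s).comp (L s r'))) (ζ t r' ω)⟫)
          + ∑ r ∈ Finset.univ.filter (fun r => succ r = s),
              ∑ i ∈ Finset.univ.filter (fun i => leaf i = s),
                ⟪ζ t r ω, ((ContinuousLinearMap.adjoint (L s r)).comp
                  ((P s).comp (ι s i))) (w t i ω)⟫)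
          + ((∑ i ∈ Finset.univ.filter (fun i => leaf i = s),
              ∑ r ∈ Finset.univ.filter (fun r => succ r = s),
                ⟪w t i ω, ((ContinuousLinearMap.adjoint (ι s i)).comp
                  ((P s).comp (L s r))) (ζ t r ω)⟫)
            + ∑ i ∈ Finset.univ.filter (fun i => leaf i = s),
                ∑ i' ∈ Finset.univ.filter (fun i => leaf i = s),
                  ⟪w t i ω, ((ContinuousLinearMap.adjoint (ι s i)).comp
                    ((P s).comp (ι s i'))) (w t i' ω)⟫) ∂μ := by
          congr 1; funext ω; exact hquad s ω
      _ = (∫ ω, ∑ r ∈ Finset.univ.filter (fun r => succ r = s),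
            ∑ r' ∈ Finset.univ.filter (fun r => succ r = s),
              ⟪ζ t r ω, ((ContinuousLinearMap.adjoint (L s r)).comp
                ((P s).comp (L s r'))) (ζ t r' ω)⟫ ∂μ)
          + (∫ ω, ∑ r ∈ Finset.univ.filter (fun r => succ r = s),
              ∑ i ∈ Finset.univ.filter (fun i => leaf i = s),
                ⟪ζ t r ω, ((ContinuousLinearMap.adjoint (L s r)).comp
                  ((P s).comp (ι s i))) (w t i ω)⟫ ∂μ)
          + ((∫ ω, ∑ i ∈ Finset.univ.filter (fun i => leaf i = s),
              ∑ r ∈ Finset.univ.filter (fun r => succ r = s),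
                ⟪w t i ω, ((ContinuousLinearMap.adjoint (ι s i)).comp
                  ((P s).comp (L s r))) (ζ t r ω)⟫ ∂μ)
            + ∫ ω, ∑ i ∈ Finset.univ.filter (fun i => leaf i = s),
                ∑ i' ∈ Finset.univ.filter (fun i => leaf i = s),
                  ⟪w t i ω, ((ContinuousLinearMap.adjoint (ι s i)).comp
                    ((P s).comp (ι s i'))) (w t i' ω)⟫ ∂μ) := by
          have h12 := integral_add I1 I2
          have h34 := integral_add I3 I4
          have h := integral_add (I1.add I2) (I3.add I4)
          exact h.trans (congrArg₂ (· + ·) h12 h34)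
      _ = (∑ r ∈ Finset.univ.filter (fun r => succ r = s),
            ∫ ω, ⟪ζ t r ω, ((ContinuousLinearMap.adjoint (L s r)).comp
              ((P s).comp (L s r))) (ζ t r ω)⟫ ∂μ)
          + σw ^ 2 * ∑ i ∈ Finset.univ.filter (fun i => leaf i = s),
              LinearMap.trace ℝ (EuclideanSpace ℝ (Fin (ddim i)))
                (((ContinuousLinearMap.adjoint (ι s i)).comp
                  ((P s).comp (ι s i))).toLinearMap) := by
          have e1 : (∫ ω, ∑ r ∈ Finset.univ.filter (fun r => succ r = s),
              ∑ r' ∈ Finset.univ.filter (fun r => succ r = s),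
                ⟪ζ t r ω, ((ContinuousLinearMap.adjoint (L s r)).comp
                  ((P s).comp (L s r'))) (ζ t r' ω)⟫ ∂μ)
              = ∑ r ∈ Finset.univ.filter (fun r => succ r = s),
                  ∫ ω, ⟪ζ t r ω, ((ContinuousLinearMap.adjoint (L s r)).comp
                    ((P s).comp (L s r))) (ζ t r ω)⟫ ∂μ := by
            rw [integral_finset_sum _ (fun r _ =>
              integrable_finset_sum _ fun r' _ => hIζζ s r r')]
            refine Finset.sum_congr rfl fun r hr => ?_
            rw [integral_finset_sum _ (fun r' _ => hIζζ s r r')]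
            refine Finset.sum_eq_single_of_mem r hr fun r' _ hne => ?_
            exact cross_zero _ _ (hζmeas t r) (hζmeas t r') (hζint t r) (hζint t r')
              (hζmean t r) (hindζζ t r r' (Ne.symm hne)) _
          have e2 : (∫ ω, ∑ r ∈ Finset.univ.filter (fun r => succ r = s),
              ∑ i ∈ Finset.univ.filter (fun i => leaf i = s),
                ⟪ζ t r ω, ((ContinuousLinearMap.adjoint (L s r)).comp
                  ((P s).comp (ι s i))) (w t i ω)⟫ ∂μ) = 0 := by
            rw [integral_finset_sum _ (fun r _ =>
              integrable_finset_sum _ fun i _ => hIζw s r i)]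
            refine Finset.sum_eq_zero fun r _ => ?_
            rw [integral_finset_sum _ (fun i _ => hIζw s r i)]
            refine Finset.sum_eq_zero fun i _ => ?_
            exact cross_zero _ _ (hζmeas t r) (hwmeas t i) (hζint t r) (hwint t i)
              (hζmean t r) (hindζw t r i) _
          have e3 : (∫ ω, ∑ i ∈ Finset.univ.filter (fun i => leaf i = s),
              ∑ r ∈ Finset.univ.filter (fun r => succ r = s),
                ⟪w t i ω, ((ContinuousLinearMap.adjoint (ι s i)).comp
                  ((P s).comp (L s r))) (ζ t r ω)⟫ ∂μ) = 0 := by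
            rw [integral_finset_sum _ (fun i _ =>
              integrable_finset_sum _ fun r _ => hIwζ s r i)]
            refine Finset.sum_eq_zero fun i _ => ?_
            rw [integral_finset_sum _ (fun r _ => hIwζ s r i)]
            refine Finset.sum_eq_zero fun r _ => ?_
            exact cross_zero _ _ (hwmeas t i) (hζmeas t r) (hwint t i) (hζint t r)
              (hwmean t i) (hindζw t r i).symm _
          have e4 : (∫ ω, ∑ i ∈ Finset.univ.filter (fun i => leaf i = s),
              ∑ i' ∈ Finset.univ.filter (fun i => leaf i = s),
                ⟪w t i ω, ((ContinuousLinearMap.adjoint (ι s i)).comp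
                  ((P s).comp (ι s i'))) (w t i' ω)⟫ ∂μ)
              = σw ^ 2 * ∑ i ∈ Finset.univ.filter (fun i => leaf i = s),
                  LinearMap.trace ℝ (EuclideanSpace ℝ (Fin (ddim i)))
                    (((ContinuousLinearMap.adjoint (ι s i)).comp
                      ((P s).comp (ι s i))).toLinearMap) := by
            rw [integral_finset_sum _ (fun i _ =>
              integrable_finset_sum _ fun i' _ => hIww s i i'), Finset.mul_sum]
            refine Finset.sum_congr rfl fun i hi => ?_
            rw [integral_finset_sum _ (fun i' _ => hIww s i i')]
            rw [Finset.sum_eq_single_of_mem i hi fun i' _ hne =>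
              cross_zero _ _ (hwmeas t i) (hwmeas t i') (hwint t i) (hwint t i')
                (hwmean t i) (hindww t i i' (Ne.symm hne)) _]
            exact noise_quad _ (hwmeas t i) (hwint t i) (σw ^ 2) (hwcov t i) _
          rw [e1, e2, e3, e4]
          ring
  -- pointwise split of the current cost via the Riccati identity
  have hsplit : ∀ (s : U) (ω : Ω), ⟪ζ t s ω, P s (ζ t s ω)⟫ =
      ⟪ζ t s ω, (Q s + (ContinuousLinearMap.adjoint (K s)).comp
        ((Rm s).comp (K s))) (ζ t s ω)⟫
      + ⟪ζ t s ω, ((ContinuousLinearMap.adjoint (L (succ s) s)).comp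
          ((P (succ s)).comp (L (succ s) s))) (ζ t s ω)⟫ := by
    intro s ω
    conv_lhs => rw [hP s]
    rw [ContinuousLinearMap.add_apply, inner_add_right]
  have hIQ : ∀ s : U, Integrable (fun ω => ⟪ζ t s ω,
      (Q s + (ContinuousLinearMap.adjoint (K s)).comp ((Rm s).comp (K s))) (ζ t s ω)⟫) μ :=
    fun s => quad_integrable _ _ (hζmeas t s) (hζmeas t s) (hζint t s) (hζint t s) _
  have hIM : ∀ s : U, Integrable (fun ω => ⟪ζ t s ω,
      ((ContinuousLinearMap.adjoint (L (succ s) s)).comp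
        ((P (succ s)).comp (L (succ s) s))) (ζ t s ω)⟫) μ :=
    fun s => quad_integrable _ _ (hζmeas t s) (hζmeas t s) (hζint t s) (hζint t s) _
  -- assemble everything
  have eA : ∫ ω, ∑ s : U, ⟪ζ t s ω, P s (ζ t s ω)⟫ ∂μ
      = (∑ s : U, ∫ ω, ⟪ζ t s ω, (Q s + (ContinuousLinearMap.adjoint (K s)).comp
          ((Rm s).comp (K s))) (ζ t s ω)⟫ ∂μ)
        + ∑ s : U, ∫ ω, ⟪ζ t s ω, ((ContinuousLinearMap.adjoint (L (succ s) s)).comp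
            ((P (succ s)).comp (L (succ s) s))) (ζ t s ω)⟫ ∂μ := by
    rw [integral_finset_sum _ (fun s _ =>
      quad_integrable _ _ (hζmeas t s) (hζmeas t s) (hζint t s) (hζint t s) (P s))]
    rw [← Finset.sum_add_distrib]
    refine Finset.sum_congr rfl fun s _ => ?_
    calc ∫ ω, ⟪ζ t s ω, P s (ζ t s ω)⟫ ∂μ
        = ∫ ω, (⟪ζ t s ω, (Q s + (ContinuousLinearMap.adjoint (K s)).comp
            ((Rm s).comp (K s))) (ζ t s ω)⟫
          + ⟪ζ t s ω, ((ContinuousLinearMap.adjoint (L (succ s) s)).comp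
              ((P (succ s)).comp (L (succ s) s))) (ζ t s ω)⟫) ∂μ := by
          congr 1; funext ω; exact hsplit s ω
      _ = _ := integral_add (hIQ s) (hIM s)
  have eB : ∫ ω, ∑ s : U, ⟪ζ (t+1) s ω, P s (ζ (t+1) s ω)⟫ ∂μ
      = (∑ s : U, ∫ ω, ⟪ζ t s ω, ((ContinuousLinearMap.adjoint (L (succ s) s)).comp
          ((P (succ s)).comp (L (succ s) s))) (ζ t s ω)⟫ ∂μ)
        + σw ^ 2 * ∑ i : V,
            LinearMap.trace ℝ (EuclideanSpace ℝ (Fin (ddim i)))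
              (((ContinuousLinearMap.adjoint (ι (leaf i) i)).comp
                ((P (leaf i)).comp (ι (leaf i) i))).toLinearMap) := by
    rw [integral_finset_sum _ (fun s _ =>
      quad_integrable _ _ (hζmeas (t+1) s) (hζmeas (t+1) s)
        (hζint (t+1) s) (hζint (t+1) s) (P s))]
    rw [Finset.sum_congr rfl fun s (_ : s ∈ Finset.univ) => step s]
    rw [Finset.sum_add_distrib]
    congr 1
    · calc ∑ s : U, ∑ r ∈ Finset.univ.filter (fun r => succ r = s),
            ∫ ω, ⟪ζ t r ω, ((ContinuousLinearMap.adjoint (L s r)).comp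
              ((P s).comp (L s r))) (ζ t r ω)⟫ ∂μ
          = ∑ s : U, ∑ r ∈ Finset.univ.filter (fun r => succ r = s),
              ∫ ω, ⟪ζ t r ω, ((ContinuousLinearMap.adjoint (L (succ r) r)).comp
                ((P (succ r)).comp (L (succ r) r))) (ζ t r ω)⟫ ∂μ := by
            refine Finset.sum_congr rfl fun s _ => Finset.sum_congr rfl fun r hr => ?_
            have h := (Finset.mem_filter.mp hr).2
            subst h
            rfl
        _ = _ := Finset.sum_fiberwise _ _ _
    · rw [← Finset.mul_sum]
      congr 1
      calc ∑ s : U, ∑ i ∈ Finset.univ.filter (fun i => leaf i = s),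
            LinearMap.trace ℝ (EuclideanSpace ℝ (Fin (ddim i)))
              (((ContinuousLinearMap.adjoint (ι s i)).comp
                ((P s).comp (ι s i))).toLinearMap)
          = ∑ s : U, ∑ i ∈ Finset.univ.filter (fun i => leaf i = s),
              LinearMap.trace ℝ (EuclideanSpace ℝ (Fin (ddim i)))
                (((ContinuousLinearMap.adjoint (ι (leaf i) i)).comp
                  ((P (leaf i)).comp (ι (leaf i) i))).toLinearMap) := by
            refine Finset.sum_congr rfl fun s _ => Finset.sum_congr rfl fun i hi => ?_
            have h := (Finset.mem_filter.mp hi).2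
            subst h
            rfl
        _ = _ := Finset.sum_fiberwise _ _ _
  have eC : ∫ ω, ∑ s : U, ⟪ζ t s ω, (Q s + (ContinuousLinearMap.adjoint (K s)).comp
      ((Rm s).comp (K s))) (ζ t s ω)⟫ ∂μ
      = ∑ s : U, ∫ ω, ⟪ζ t s ω, (Q s + (ContinuousLinearMap.adjoint (K s)).comp
          ((Rm s).comp (K s))) (ζ t s ω)⟫ ∂μ :=
    integral_finset_sum _ fun s _ => hIQ s
  rw [eA, eB, eC]
  ring
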